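/- Let k be even and a₁,…,a_k ∈ F_q \ {0} not admitting a partition into pairs summing to zero. Then there exists a function f : F_q → [0,1] with E f = 1/2 such that Σ_{r ∈ F_q \ {0}} f̂(a₁r)⋯f̂(a_kr) < 0, and consequently Λ_{L=0}(f) + Λ_{L=0}(1−f) < 2^{1−k}, so the equation a₁x₁+⋯+a_kx_k = 0 is neither common nor Sidorenko. -/

import Mathlib

open Finset
open scoped Classical

/-- The Fourier transform `f̂(r) = E_x f(x) conj(r(x))` on a finite vector space. -/
noncomputable def fourierHat {V : Type} [AddCommGroup V] [Fintype V]
    (f : V → ℂ) (r : AddChar V ℂ) : ℂ :=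
  (∑ x, f x * (starRingEnd ℂ) (r x)) / (Fintype.card V : ℂ)

/-- The character `x ↦ r(a • x)` obtained by rescaling `r` by `a ∈ F_q`. -/
noncomputable def scaleChar {F : Type} [Field F] {V : Type} [AddCommGroup V] [Module F V]
    (a : F) (r : AddChar V ℂ) : AddChar V ℂ :=
  r.compAddMonoidHom (DistribMulAction.toAddMonoidHom V a)

/- aux -/
set_option maxHeartbeats 1000000
section Aux
variable {F : Type} [Field F] [Fintype F] [DecidableEq F]

lemma scaleChar_apply (a : F) (r : AddChar F ℂ) (x : F) : scaleChar a r x = r (a * x) := by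
  simp [scaleChar, AddChar.compAddMonoidHom, smul_eq_mul]

lemma addChar_zero_eq_one {A M : Type} [AddMonoid A] [Monoid M] :
    (0 : AddChar A M) = (1 : AddChar A M) := rfl

lemma scaleChar_eq_one_iff {a : F} (ha : a ≠ 0) {r : AddChar F ℂ} :
    scaleChar a r = 1 ↔ r = 1 := by
  constructor
  · intro h
    ext y
    have := DFunLike.congr_fun h (a⁻¹ * y)
    rw [scaleChar_apply] at this
    rw [← mul_assoc, mul_inv_cancel₀ ha, one_mul] at this
    simpa using this
  · intro h
    ext y
    rw [scaleChar_apply, h]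
    simp

lemma scaleChar_inj {r : AddChar F ℂ} (hr : r ≠ 1) {c d : F}
    (h : scaleChar c r = scaleChar d r) : c = d := by
  by_contra hcd
  apply hr
  ext y
  have h2 := DFunLike.congr_fun h ((c - d)⁻¹ * y)
  rw [scaleChar_apply, scaleChar_apply] at h2
  have h3 : r (c * ((c-d)⁻¹ * y)) * (r (d * ((c-d)⁻¹ * y)))⁻¹ = 1 := by
    rw [h2, mul_inv_cancel₀]
    intro h0
    -- r value nonzero
    have := AddChar.norm_apply (G := F) (ψ := r) (d * ((c-d)⁻¹ * y))
    rw [h0] at this; simp at this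
  rw [← AddChar.map_neg_eq_inv, ← AddChar.map_add_eq_mul] at h3
  have hcd' : c - d ≠ 0 := sub_ne_zero.mpr hcd
  have h4 : c * ((c - d)⁻¹ * y) + -(d * ((c - d)⁻¹ * y)) = y := by
    have : c * ((c - d)⁻¹ * y) + -(d * ((c - d)⁻¹ * y)) = (c - d) * ((c - d)⁻¹ * y) := by ring
    rw [this, ← mul_assoc, mul_inv_cancel₀ hcd', one_mul]
  rw [h4] at h3
  simpa using h3

lemma scaleChar_inv (c : F) (r : AddChar F ℂ) :
    (scaleChar c r)⁻¹ = scaleChar (-c) r := by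
  ext y
  rw [AddChar.inv_apply, scaleChar_apply, scaleChar_apply]
  ring_nf

lemma scaleChar_inv' (c : F) (r : AddChar F ℂ) :
    scaleChar c r⁻¹ = (scaleChar c r)⁻¹ := by
  ext y
  rw [AddChar.inv_apply, scaleChar_apply, AddChar.inv_apply, scaleChar_apply]
  ring_nf

lemma sum_addChar_eq_zero {r : AddChar F ℂ} (hr : r ≠ 1) : ∑ x, r x = 0 := by
  rw [AddChar.sum_eq_ite]
  rw [if_neg (by rw [addChar_zero_eq_one]; exact hr)]

lemma addChar_map_sum {A M : Type} [AddCommMonoid A] [CommMonoid M] (χ : AddChar A M)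
    {ι : Type} (s : Finset ι) (g : ι → A) :
    χ (∑ i ∈ s, g i) = ∏ i ∈ s, χ (g i) := by
  induction s using Finset.cons_induction with
  | empty => simp
  | cons i s hi ih => rw [Finset.sum_cons, Finset.prod_cons, AddChar.map_add_eq_mul, ih]

lemma sum_mul_conj (χ χ₀ : AddChar F ℂ) :
    ∑ x, χ x * (starRingEnd ℂ) (χ₀ x)
      = if χ = χ₀ then (Fintype.card F : ℂ) else 0 := by
  have h1 : ∀ x, χ x * (starRingEnd ℂ) (χ₀ x) = (χ * χ₀⁻¹) x := by
    intro x
    rw [← AddChar.inv_apply_eq_conj]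
    rw [AddChar.mul_apply, AddChar.inv_apply']
  simp_rw [h1]
  rw [AddChar.sum_eq_ite]
  congr 1
  rw [addChar_zero_eq_one]
  simp [mul_inv_eq_one]

lemma exists_pairing_aux {I G : Type} [DecidableEq I] [Fintype I] [CommGroup G] [DecidableEq G] :
    ∀ (n : ℕ) (s : Finset I) (b : I → G), s.card = n →
    (∀ v : G, (s.filter (fun i => b i = v)).card = (s.filter (fun i => b i = v⁻¹)).card) →
    (∀ v : G, v = v⁻¹ → Even (s.filter (fun i => b i = v)).card) →
    ∃ σ : Equiv.Perm I, (∀ i ∈ s, σ i ∈ s ∧ σ i ≠ i ∧ σ (σ i) = i ∧ b (σ i) = (b i)⁻¹)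
      ∧ (∀ i ∉ s, σ i = i) := by
  intro n
  induction n using Nat.strong_induction_on with
  | _ n IH =>
    intro s b hcard H1 H2
    rcases s.eq_empty_or_nonempty with rfl | ⟨i₀, hi₀⟩
    · exact ⟨1, by simp, by simp⟩
    obtain ⟨v, hv⟩ : ∃ v, b i₀ = v := ⟨b i₀, rfl⟩
    have hi₀f : i₀ ∈ s.filter (fun i => b i = v) := by simp [hi₀, hv]
    -- find a partner j₀
    have hj₀ : ∃ j₀ ∈ s, j₀ ≠ i₀ ∧ b j₀ = v⁻¹ := by
      by_cases hvv : v = v⁻¹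
      · have he : Even (s.filter (fun i => b i = v)).card := H2 v hvv
        have h1 : 1 ≤ (s.filter (fun i => b i = v)).card := card_pos.mpr ⟨i₀, hi₀f⟩
        have h2 : 1 < (s.filter (fun i => b i = v)).card := by
          rcases he with ⟨t, ht⟩; omega
        obtain ⟨j₀, hj₀, hne⟩ := Finset.exists_mem_ne h2 i₀
        simp only [mem_filter] at hj₀
        exact ⟨j₀, hj₀.1, hne, hvv ▸ hj₀.2⟩
      · have h1 : 0 < (s.filter (fun i => b i = v⁻¹)).card := by
          rw [← H1 v]; exact card_pos.mpr ⟨i₀, hi₀f⟩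
        obtain ⟨j₀, hj₀⟩ := card_pos.mp h1
        simp only [mem_filter] at hj₀
        refine ⟨j₀, hj₀.1, fun h => hvv ?_, hj₀.2⟩
        calc v = b i₀ := hv.symm
          _ = b j₀ := by rw [h]
          _ = v⁻¹ := hj₀.2
    obtain ⟨j₀, hj₀s, hj₀ne, hbj₀⟩ := hj₀
    set s' := (s.erase i₀).erase j₀ with hs'
    have hcard' : ∀ w : G, (s'.filter (fun i => b i = w)).card
        = (s.filter (fun i => b i = w)).card
          - (if v = w then 1 else 0) - (if v⁻¹ = w then 1 else 0) := by
      intro w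
      rw [hs', Finset.filter_erase, Finset.filter_erase]
      set t := s.filter (fun i => b i = w) with ht
      have hjmem : j₀ ∈ t.erase i₀ ↔ v⁻¹ = w := by
        simp only [ht, Finset.mem_erase, mem_filter]
        constructor
        · rintro ⟨_, _, h⟩; rw [← h, hbj₀]
        · intro h; exact ⟨hj₀ne, hj₀s, by rw [← h, hbj₀]⟩
      have himem : i₀ ∈ t ↔ v = w := by
        simp only [ht, mem_filter]
        constructor
        · rintro ⟨_, h⟩; rw [← h, hv]
        · intro h; exact ⟨hi₀, by rw [hv, h]⟩
      by_cases h2 : v⁻¹ = w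
      · rw [Finset.card_erase_of_mem (hjmem.mpr h2), if_pos h2]
        by_cases h1 : v = w
        · rw [Finset.card_erase_of_mem (himem.mpr h1), if_pos h1]
        · rw [Finset.erase_eq_of_notMem (fun hm => h1 (himem.mp hm)), if_neg h1]
          omega
      · rw [Finset.erase_eq_of_notMem (fun hm => h2 (hjmem.mp hm)), if_neg h2]
        by_cases h1 : v = w
        · rw [Finset.card_erase_of_mem (himem.mpr h1), if_pos h1]
          omega
        · rw [Finset.erase_eq_of_notMem (fun hm => h1 (himem.mp hm)), if_neg h1]
          omega
    have hj₀s' : j₀ ∈ s.erase i₀ := Finset.mem_erase.mpr ⟨hj₀ne, hj₀s⟩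
    have hcards' : s'.card = s.card - 2 := by
      rw [hs', Finset.card_erase_of_mem hj₀s', Finset.card_erase_of_mem hi₀]
      omega
    have hlt : s'.card < n := by
      have : 0 < s.card := card_pos.mpr ⟨i₀, hi₀⟩
      omega
    -- new hypotheses
    have hcvpos : 0 < (s.filter (fun i => b i = v)).card := card_pos.mpr ⟨i₀, hi₀f⟩
    have hcvipos : 0 < (s.filter (fun i => b i = v⁻¹)).card := by rw [← H1 v]; exact hcvpos
    have H1' : ∀ w : G, (s'.filter (fun i => b i = w)).card
        = (s'.filter (fun i => b i = w⁻¹)).card := by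
      intro w
      rw [hcard' w, hcard' w⁻¹, H1 w]
      have e1 : (v = w⁻¹) ↔ (v⁻¹ = w) := by
        constructor <;> intro h
        · rw [h, inv_inv]
        · rw [← h, inv_inv]
      have e2 : (v⁻¹ = w⁻¹) ↔ (v = w) := inv_inj
      rw [if_congr e1 rfl rfl, if_congr e2 rfl rfl]
      by_cases h1 : v = w <;> by_cases h2 : v⁻¹ = w <;>
        simp only [if_pos, if_neg, h1, h2, if_true, if_false] <;> omega
    have H2' : ∀ w : G, w = w⁻¹ → Even (s'.filter (fun i => b i = w)).card := by
      intro w hw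
      rw [hcard' w]
      by_cases h1 : v = w
      · -- then v⁻¹ = w too since w = w⁻¹
        have h2 : v⁻¹ = w := by rw [h1, ← hw]
        rw [if_pos h1, if_pos h2]
        have he := H2 w hw
        have hpos : 0 < (s.filter (fun i => b i = w)).card := by rwa [h1] at hcvpos
        rcases he with ⟨t, ht⟩
        refine ⟨t - 1, by omega⟩
      · by_cases h2 : v⁻¹ = w
        · exfalso
          exact h1 (by rw [← inv_inv v, h2, ← hw])
        · rw [if_neg h1, if_neg h2]
          simpa using H2 w hw
    obtain ⟨σ', hσ'1, hσ'2⟩ := IH s'.card hlt s' b rfl H1' H2'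
    have hi₀ns' : i₀ ∉ s' := by simp [hs']
    have hj₀ns' : j₀ ∉ s' := by simp [hs']
    refine ⟨σ' * Equiv.swap i₀ j₀, ?_, ?_⟩
    · intro i his
      by_cases h1 : i = i₀
      · rw [h1]
        simp only [Equiv.Perm.mul_apply, Equiv.swap_apply_left]
        rw [hσ'2 j₀ hj₀ns']
        refine ⟨hj₀s, fun h => hj₀ne h, ?_, by rw [hbj₀, hv]⟩
        simp only [Equiv.Perm.mul_apply, Equiv.swap_apply_right]
        rw [hσ'2 i₀ hi₀ns']
      · by_cases h2 : i = j₀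
        · rw [h2]
          simp only [Equiv.Perm.mul_apply, Equiv.swap_apply_right]
          rw [hσ'2 i₀ hi₀ns']
          refine ⟨hi₀, fun h => hj₀ne h.symm, ?_, by rw [hv, hbj₀, inv_inv]⟩
          simp only [Equiv.Perm.mul_apply, Equiv.swap_apply_left]
          rw [hσ'2 j₀ hj₀ns']
        · have his' : i ∈ s' := by
            rw [hs']; exact Finset.mem_erase.mpr ⟨h2, Finset.mem_erase.mpr ⟨h1, his⟩⟩
          obtain ⟨hm, hne, hinv, hb⟩ := hσ'1 i his'
          have hswap : Equiv.swap i₀ j₀ i = i := Equiv.swap_apply_of_ne_of_ne h1 h2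
          have hm1 : σ' i ≠ i₀ := fun h => hi₀ns' (h ▸ hm)
          have hm2 : σ' i ≠ j₀ := fun h => hj₀ns' (h ▸ hm)
          have hswap2 : Equiv.swap i₀ j₀ (σ' i) = σ' i := Equiv.swap_apply_of_ne_of_ne hm1 hm2
          simp only [Equiv.Perm.mul_apply, hswap, hswap2]
          have hms : σ' i ∈ s := Finset.mem_of_mem_erase (Finset.mem_of_mem_erase (hs' ▸ hm))
          exact ⟨hms, hne, hinv, hb⟩
    · intro i his
      have h1 : i ≠ i₀ := fun h => his (h ▸ hi₀)
      have h2 : i ≠ j₀ := fun h => his (h ▸ hj₀s)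
      have hins' : i ∉ s' := fun h => his (Finset.mem_of_mem_erase (Finset.mem_of_mem_erase (hs' ▸ h)))
      simp only [Equiv.Perm.mul_apply, Equiv.swap_apply_of_ne_of_ne h1 h2]
      exact hσ'2 i hins'
lemma exists_eta {F : Type} [Field F] [Fintype F] [DecidableEq F]
    (k : ℕ) (a : Fin k → F) (ha : ∀ i, a i ≠ 0)
    (hnopair : ¬∃ σ : Equiv.Perm (Fin k), ∀ i, σ i ≠ i ∧ σ (σ i) = i ∧ a (σ i) = - a i)
    (χ : AddChar F ℂ) (hχ : χ ≠ 1) :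
    ∃ η : (AddChar F ℂ) → ZMod (2*k+2), (∀ ρ : AddChar F ℂ, η ρ⁻¹ = - η ρ) ∧
      (∑ i, η (scaleChar (a i) χ)) ≠ 0 := by
  by_contra hcon
  push_neg at hcon
  set m := 2*k+2 with hm
  set b : Fin k → AddChar F ℂ := fun i => scaleChar (a i) χ with hb
  have hmk : k < m := by omega
  -- H1
  have H1 : ∀ v : AddChar F ℂ,
      (univ.filter (fun i => b i = v)).card = (univ.filter (fun i => b i = v⁻¹)).card := by
    intro v
    by_cases hvv : v = v⁻¹
    · congr 1
      apply Finset.filter_congr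
      intro i _
      rw [← hvv]
    · set η : AddChar F ℂ → ZMod m :=
        fun w => if w = v then 1 else if w = v⁻¹ then -1 else 0 with hη
      have hodd : ∀ ρ : AddChar F ℂ, η ρ⁻¹ = - η ρ := by
        intro ρ
        simp only [hη]
        by_cases h1 : ρ = v
        · rw [h1, if_neg (fun h => hvv h.symm), if_pos rfl, if_pos rfl]
        · by_cases h2 : ρ = v⁻¹
          · rw [if_pos (by rw [h2, inv_inv]), if_neg h1, if_pos h2]
            simp
          · rw [if_neg (fun h => h2 (by rw [← inv_inv ρ, h])),
              if_neg (fun h => h1 (by rw [← inv_inv ρ, h, inv_inv])), if_neg h1, if_neg h2]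
            simp
      have hsum := hcon η hodd
      have hval : ∀ i, η (b i) = (if b i = v then (1 : ZMod m) else 0)
          - (if b i = v⁻¹ then 1 else 0) := by
        intro i
        simp only [hη]
        by_cases h1 : b i = v
        · rw [if_pos h1, if_pos h1, if_neg (fun h => hvv (h1.symm.trans h)), sub_zero]
        · rw [if_neg h1, if_neg h1, zero_sub]
          by_cases h2 : b i = v⁻¹
          · rw [if_pos h2, if_pos h2]
          · rw [if_neg h2, if_neg h2, neg_zero]
      rw [Finset.sum_congr rfl (fun i _ => hval i), Finset.sum_sub_distrib,
        Finset.sum_boole, Finset.sum_boole, sub_eq_zero] at hsum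
      have hle1 : (univ.filter (fun i => b i = v)).card < m :=
        lt_of_le_of_lt (le_trans (Finset.card_filter_le _ _) (by simp)) hmk
      have hle2 : (univ.filter (fun i => b i = v⁻¹)).card < m :=
        lt_of_le_of_lt (le_trans (Finset.card_filter_le _ _) (by simp)) hmk
      have := congrArg ZMod.val hsum
      rwa [ZMod.val_natCast_of_lt hle1, ZMod.val_natCast_of_lt hle2] at this
  -- H2
  have H2 : ∀ v : AddChar F ℂ, v = v⁻¹ →
      Even (univ.filter (fun i => b i = v)).card := by
    intro v hvv
    set η : AddChar F ℂ → ZMod m := fun w => if w = v then ((k+1 : ℕ) : ZMod m) else 0 with hη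
    have hkk : ((k+1 : ℕ) : ZMod m) + ((k+1 : ℕ) : ZMod m) = 0 := by
      rw [← Nat.cast_add]
      have : (k+1) + (k+1) = m := by omega
      rw [this, hm]
      exact ZMod.natCast_self _
    have hodd : ∀ ρ : AddChar F ℂ, η ρ⁻¹ = - η ρ := by
      intro ρ
      simp only [hη]
      by_cases h1 : ρ = v
      · rw [if_pos (by rw [h1, ← hvv]), if_pos h1, eq_neg_iff_add_eq_zero]
        exact hkk
      · rw [if_neg (fun h => h1 (by rw [← inv_inv ρ, h, ← hvv])), if_neg h1, neg_zero]
    have hsum := hcon η hodd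
    simp only [hη] at hsum
    simp only [Finset.sum_ite, Finset.sum_const, Finset.sum_const_zero, smul_zero, add_zero] at hsum
    rw [nsmul_eq_mul, ← Nat.cast_mul] at hsum
    rw [ZMod.natCast_eq_zero_iff] at hsum
    obtain ⟨t, ht⟩ := hsum
    refine ⟨t, ?_⟩
    have h1 : (univ.filter (fun i => b i = v)).card * (k+1) = (t+t)*(k+1) := by
      calc (univ.filter (fun i => b i = v)).card * (k+1) = m * t := ht
        _ = (t+t)*(k+1) := by rw [hm]; ring
    exact Nat.eq_of_mul_eq_mul_right (Nat.succ_pos k) h1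
  obtain ⟨σ, hσ1, hσ2⟩ := exists_pairing_aux (Fintype.card (Fin k)) univ b rfl H1 H2
  apply hnopair
  refine ⟨σ, fun i => ?_⟩
  obtain ⟨_, hne, hinv, hval⟩ := hσ1 i (Finset.mem_univ i)
  refine ⟨hne, hinv, ?_⟩
  apply scaleChar_inj hχ
  rw [← scaleChar_inv]
  exact hval
section Xi
variable {F : Type} [Field F] [Fintype F] [DecidableEq F]

lemma psi_ne_one {m : ℕ} [NeZero m] {z : ZMod m}
    (h : (AddChar.circleEquivComplex (AddChar.zmod m 1) : AddChar (ZMod m) ℂ) z = 1) :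
    z = 0 := by
  have hc : AddChar.zmod m 1 z = 1 := by
    have happ : (AddChar.circleEquivComplex (AddChar.zmod m 1) : AddChar (ZMod m) ℂ) z
        = ((AddChar.zmod m 1 z : Circle) : ℂ) := rfl
    rw [happ] at h
    exact Circle.coe_injective (by simpa using h)
  have hmul : ∀ x y : ZMod m, AddChar.zmod m x y = AddChar.zmod m 1 (x * y) := by
    intro x y
    simp only [AddChar.zmod, AddChar.compAddMonoidHom]
    norm_num
  have key : ∀ y, AddChar.zmod m z y = 1 := by
    intro y
    have hy : z * y = y.val • z := by
      rw [nsmul_eq_mul, ZMod.natCast_val, ZMod.cast_id, mul_comm]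
    rw [hmul z y, hy, AddChar.map_nsmul_eq_pow, hc, one_pow]
  have : AddChar.zmod m z = AddChar.zmod m 0 := by
    ext y
    rw [AddChar.zmod_zero, AddChar.one_apply, key y]
  exact AddChar.zmod_injective this
  
lemma exists_xi (k : ℕ) (a : Fin k → F) (ha : ∀ i, a i ≠ 0)
    (hnopair : ¬∃ σ : Equiv.Perm (Fin k), ∀ i, σ i ≠ i ∧ σ (σ i) = i ∧ a (σ i) = - a i) :
    ∃ ξ : AddChar F ℂ → ℂ, (∀ ρ : AddChar F ℂ, ξ ρ⁻¹ = (starRingEnd ℂ) (ξ ρ)) ∧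
      (∀ ρ : AddChar F ℂ, ‖ξ ρ‖ = 1) ∧
      (∃ T : ℝ, (∑ χ ∈ Finset.univ.filter (fun χ : AddChar F ℂ => χ ≠ 1),
          ∏ i, ξ (scaleChar (a i) χ)) = (T : ℂ) ∧ T < 0) := by
  set m := 2*k+2 with hm
  haveI : NeZero m := ⟨by omega⟩
  set ψ : AddChar (ZMod m) ℂ := AddChar.circleEquivComplex (AddChar.zmod m 1) with hψ
  -- the subgroup of odd sign patterns
  set S : AddSubgroup ((AddChar F ℂ) → ZMod m) :=
    { carrier := {η | ∀ ρ : AddChar F ℂ, η ρ⁻¹ = - η ρ}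
      add_mem' := by
        intro η₁ η₂ h1 h2
        intro ρ
        simp only [Pi.add_apply, h1 ρ, h2 ρ, neg_add]
      zero_mem' := by intro ρ; simp
      neg_mem' := by
        intro η h ρ
        simp only [Pi.neg_apply, h ρ, neg_neg] } with hS
  haveI : Fintype S := Fintype.ofFinite S
  -- the summed character
  set Phi : AddChar F ℂ → (S → ℂ) := fun χ => fun η =>
    ψ (∑ i, (η : (AddChar F ℂ) → ZMod m) (scaleChar (a i) χ)) with hPhi
  have hPhiChar : ∀ χ : AddChar F ℂ, ∃ φ : AddChar S ℂ, ∀ η : S, φ η = Phi χ η := by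
    intro χ
    refine ⟨ψ.compAddMonoidHom
      { toFun := fun η : S => ∑ i, (η : (AddChar F ℂ) → ZMod m) (scaleChar (a i) χ)
        map_zero' := by simp
        map_add' := by
          intro η₁ η₂
          simp [Finset.sum_add_distrib] }, fun η => rfl⟩
  -- sum over S of Phi χ vanishes for χ ≠ 1
  have hPhiSum : ∀ χ : AddChar F ℂ, χ ≠ 1 → ∑ η : S, Phi χ η = 0 := by
    intro χ hχ
    obtain ⟨φ, hφ⟩ := hPhiChar χ
    rw [← Finset.sum_congr rfl (fun η _ => hφ η)]
    apply AddChar.sum_eq_zero_iff_ne_zero.mpr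
    obtain ⟨η₀, hodd₀, hL₀⟩ := exists_eta k a ha hnopair χ hχ
    intro h0
    apply hL₀
    have := DFunLike.congr_fun h0 (⟨η₀, hodd₀⟩ : S)
    rw [hφ, AddChar.zero_apply] at this
    by_contra hne
    exact hne (psi_ne_one this)
  -- the big sum
  set T : S → ℂ := fun η => ∑ χ ∈ Finset.univ.filter (fun χ : AddChar F ℂ => χ ≠ 1),
    Phi χ η with hT
  have hTsum : ∑ η : S, T η = 0 := by
    rw [hT]
    rw [Finset.sum_comm]
    apply Finset.sum_eq_zero
    intro χ hχ
    exact hPhiSum χ (Finset.mem_filter.mp hχ).2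
  have hT0 : (T 0) = ((Finset.univ.filter (fun χ : AddChar F ℂ => χ ≠ 1)).card : ℂ) := by
    rw [hT]
    simp only [hPhi]
    rw [Finset.sum_congr rfl (fun χ _ => ?_)]
    · rw [Finset.sum_const, nsmul_eq_mul, mul_one]
    · show ψ (∑ i, (0 : (AddChar F ℂ) → ZMod m) (scaleChar (a i) χ)) = 1
      simp
  have hcardpos : 0 < (Finset.univ.filter (fun χ : AddChar F ℂ => χ ≠ 1)).card := by
    rw [Finset.card_pos]
    have h2 : 1 < Fintype.card (AddChar F ℂ) := by
      rw [AddChar.card_eq]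
      exact Fintype.one_lt_card
    obtain ⟨χ, hχ⟩ := Fintype.exists_ne_of_one_lt_card h2 1
    exact ⟨χ, by simp [hχ]⟩
  -- realness of T η
  have hTreal : ∀ η : S, (starRingEnd ℂ) (T η) = T η := by
    intro η
    rw [hT]
    simp only [map_sum]
    rw [Finset.sum_nbij' (i := fun χ => χ⁻¹) (j := fun χ => χ⁻¹)]
    · intro χ hχ
      simp only [Finset.mem_filter, Finset.mem_univ, true_and] at hχ ⊢
      intro h
      exact hχ (by rw [← inv_inv χ, h, inv_one])
    · intro χ hχ
      simp only [Finset.mem_filter, Finset.mem_univ, true_and] at hχ ⊢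
      intro h
      exact hχ (by rw [← inv_inv χ, h, inv_one])
    · intro χ _; exact inv_inv χ
    · intro χ _; exact inv_inv χ
    · intro χ hχ
      simp only [hPhi]
      rw [← AddChar.map_neg_eq_conj]
      congr 1
      rw [← Finset.sum_neg_distrib]
      apply Finset.sum_congr rfl
      intro i _
      have hη : ∀ ρ : AddChar F ℂ, (η : (AddChar F ℂ) → ZMod m) ρ⁻¹
          = - (η : (AddChar F ℂ) → ZMod m) ρ := η.2
      rw [← hη (scaleChar (a i) χ), scaleChar_inv' (a i) χ]
  -- pick a negative one
  have hexists : ∃ η : S, (T η).re < 0 := by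
    by_contra hc
    push_neg at hc
    have hsum0 : ∑ η : S, (T η).re = 0 := by
      rw [← Complex.re_sum, hTsum, Complex.zero_re]
    have hpos : 0 < (T 0).re := by
      rw [hT0]
      simpa using hcardpos
    have hle : (T 0).re ≤ ∑ η : S, (T η).re :=
      Finset.single_le_sum (fun η _ => hc η) (Finset.mem_univ 0)
    rw [hsum0] at hle
    linarith
  obtain ⟨η, hη⟩ := hexists
  refine ⟨fun ρ => ψ ((η : (AddChar F ℂ) → ZMod m) ρ), ?_, ?_, ?_⟩
  · intro ρ
    have hη : ∀ ρ : AddChar F ℂ, (η : (AddChar F ℂ) → ZMod m) ρ⁻¹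
        = - (η : (AddChar F ℂ) → ZMod m) ρ := η.2
    beta_reduce
    rw [hη ρ, AddChar.map_neg_eq_conj]
  · intro ρ
    exact AddChar.norm_apply ψ _
  · refine ⟨(T η).re, ?_, hη⟩
    beta_reduce
    have hTval : (∑ χ ∈ Finset.univ.filter (fun χ : AddChar F ℂ => χ ≠ 1),
        ∏ i, ψ ((η : (AddChar F ℂ) → ZMod m) (scaleChar (a i) χ))) = T η := by
      rw [hT]
      apply Finset.sum_congr rfl
      intro χ _
      simp only [hPhi]
      rw [addChar_map_sum]
    rw [hTval]
    have him : (T η).im = 0 := by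
      have := hTreal η
      have h2 := congrArg Complex.im this
      simp only [Complex.conj_im] at h2
      linarith
    exact Complex.ext (by simp) (by simp [him])

end Xi
section KeySum
variable {F : Type} [Field F] [Fintype F] [DecidableEq F]

lemma key_sum (k : ℕ) (a : Fin k → F) (h : Fin k → F → ℂ) :
    (Fintype.card F : ℂ) * ∑ x ∈ Finset.univ.filter
        (fun x : Fin k → F => ∑ i, a i * x i = 0), ∏ i, h i (x i)
      = ∑ χ : AddChar F ℂ, ∏ i, (∑ y, h i y * χ (a i * y)) := by
  have step1 : ∀ χ : AddChar F ℂ, ∏ i, (∑ y, h i y * χ (a i * y))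
      = ∑ x : Fin k → F, (∏ i, h i (x i)) * χ (∑ i, a i * x i) := by
    intro χ
    rw [Finset.prod_univ_sum]
    rw [Fintype.piFinset_univ]
    apply Finset.sum_congr rfl
    intro x _
    rw [Finset.prod_mul_distrib, addChar_map_sum]
  rw [Finset.sum_congr rfl (fun χ _ => step1 χ), Finset.sum_comm]
  have step2 : ∀ x : Fin k → F, ∑ χ : AddChar F ℂ, (∏ i, h i (x i)) * χ (∑ i, a i * x i)
      = if (∑ i, a i * x i) = 0 then (∏ i, h i (x i)) * (Fintype.card F : ℂ) else 0 := by
    intro x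
    rw [← Finset.mul_sum, AddChar.sum_apply_eq_ite, mul_ite, mul_zero]
  rw [Finset.sum_congr rfl (fun x _ => step2 x)]
  rw [← Finset.sum_filter]
  rw [Finset.mul_sum]
  apply Finset.sum_congr rfl
  intro x _
  ring

end KeySum
section Extra
variable {F : Type} [Field F] [Fintype F] [DecidableEq F]

lemma scaleChar_one (c : F) : scaleChar c (1 : AddChar F ℂ) = 1 := by
  ext y; rw [scaleChar_apply]; simp

lemma sum_char_mul_char (χ ρ : AddChar F ℂ) :
    ∑ x, χ x * ρ x = if χ = ρ⁻¹ then (Fintype.card F : ℂ) else 0 := by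
  have h1 : ∀ x, χ x * ρ x = (χ * ρ) x := fun x => (AddChar.mul_apply χ ρ x).symm
  simp_rw [h1]
  rw [AddChar.sum_eq_ite]
  congr 1
  rw [addChar_zero_eq_one]
  exact propext mul_eq_one_iff_eq_inv

lemma reindex_inv (s : Finset (AddChar F ℂ)) (hs : ∀ χ ∈ s, χ⁻¹ ∈ s) (Φ : AddChar F ℂ → ℂ) :
    ∑ χ ∈ s, Φ χ⁻¹ = ∑ χ ∈ s, Φ χ := by
  apply Finset.sum_nbij' (i := fun χ => χ⁻¹) (j := fun χ => χ⁻¹)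
  · exact hs
  · exact hs
  · intro χ _; exact inv_inv χ
  · intro χ _; exact inv_inv χ
  · intro χ _; rfl

end Extra
end Aux

/-- If `k` is even and the nonzero coefficients `a₁,…,a_k` admit no partition into pairs
summing to zero, then there is `f : F_q → [0,1]` of mean `1/2` whose nontrivial Fourier
contribution `Σ_{r ≠ 1} f̂(a₁r)⋯f̂(a_kr)` is (real and) negative, whence
`Λ_{L=0}(f) + Λ_{L=0}(1-f) < 2^{1-k}`: the equation is neither common nor Sidorenko. -/
theorem stmt_10 {F : Type} [Field F] [Fintype F] [DecidableEq F]
    (k : ℕ) (hk : Even k) (a : Fin k → F) (ha : ∀ i, a i ≠ 0)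
    (hnopair : ¬∃ σ : Equiv.Perm (Fin k), ∀ i, σ i ≠ i ∧ σ (σ i) = i ∧ a (σ i) = - a i) :
    ∃ f : F → ℝ, (∀ x, f x ∈ Set.Icc (0 : ℝ) 1)
      ∧ (∑ x, f x) / (Fintype.card F : ℝ) = 1 / 2
      ∧ (∃ s : ℝ, (∑ r ∈ Finset.univ.filter (fun r : AddChar F ℂ => r ≠ 1),
            ∏ i, fourierHat (fun x => (f x : ℂ)) (scaleChar (a i) r)) = (s : ℂ) ∧ s < 0)
      ∧ (∑ x ∈ Finset.univ.filter
            (fun x : Fin k → F => ∑ i, a i * x i = 0), ∏ i, f (x i)) /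
          ((Finset.univ.filter (fun x : Fin k → F => ∑ i, a i * x i = 0)).card : ℝ)
        + (∑ x ∈ Finset.univ.filter
            (fun x : Fin k → F => ∑ i, a i * x i = 0), ∏ i, (1 - f (x i))) /
          ((Finset.univ.filter (fun x : Fin k → F => ∑ i, a i * x i = 0)).card : ℝ)
        < (2 : ℝ) ^ ((1 : ℤ) - k) := by
  classical
  have hk0 : k ≠ 0 := by
    rintro rfl
    exact hnopair ⟨1, fun i => i.elim0⟩
  obtain ⟨ξ, hconj, hnorm, Tr, hTval, hTneg⟩ := exists_xi k a ha hnopair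
  set q : ℕ := Fintype.card F with hq
  have hq2 : 2 ≤ q := Fintype.one_lt_card
  have hqC : (q : ℂ) ≠ 0 := by
    simp only [Ne, Nat.cast_eq_zero]; omega
  set D1 : Finset (AddChar F ℂ) := Finset.univ.filter (fun χ : AddChar F ℂ => χ ≠ 1) with hD1
  have hD1mem : ∀ χ : AddChar F ℂ, χ ∈ D1 ↔ χ ≠ 1 := by
    intro χ; rw [hD1, Finset.mem_filter]; simp
  have hD1inv : ∀ χ ∈ D1, χ⁻¹ ∈ D1 := by
    intro χ hχ
    rw [hD1mem] at hχ ⊢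
    intro h; exact hχ (by rw [← inv_inv χ, h, inv_one])
  have hD1card : D1.card = q - 1 := by
    rw [hD1, Finset.filter_ne', Finset.card_erase_of_mem (Finset.mem_univ 1),
      Finset.card_univ, AddChar.card_eq]
  set g : F → ℂ := fun x => (1/(2*(q:ℂ))) * ∑ χ ∈ D1, ξ χ * χ x with hg
  -- realness of g
  have hgim : ∀ x, (g x).im = 0 := by
    intro x
    have hcg : (starRingEnd ℂ) (g x) = g x := by
      rw [hg]
      simp only [map_mul, map_sum]
      congr 1
      · rw [show (1/(2*(q:ℂ))) = ((1/(2*(q:ℝ)) : ℝ) : ℂ) by push_cast; ring,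
          Complex.conj_ofReal]
      · rw [← reindex_inv D1 hD1inv (fun χ => ξ χ * χ x)]
        apply Finset.sum_congr rfl
        intro χ _
        rw [hconj χ, AddChar.inv_apply', AddChar.inv_apply_eq_conj]
    have := congrArg Complex.im hcg
    simp only [Complex.conj_im] at this
    linarith
  set f : F → ℝ := fun x => 1/2 + (g x).re with hf
  have hfC : ∀ x, (f x : ℂ) = 1/2 + g x := by
    intro x
    rw [hf]
    apply Complex.ext <;> simp [hgim x]
  -- bound on g
  have habs : ∀ x, ‖g x‖ ≤ ((q:ℝ)-1)/(2*q) := by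
    intro x
    rw [hg]
    beta_reduce
    rw [norm_mul]
    have h1 : ‖(1/(2*(q:ℂ)))‖ = 1/(2*(q:ℝ)) := by
      rw [norm_div, norm_one, norm_mul, Complex.norm_two, Complex.norm_natCast]
    rw [h1]
    have h2 : ‖∑ χ ∈ D1, ξ χ * χ x‖ ≤ (q : ℝ) - 1 := by
      refine le_trans (norm_sum_le _ _) ?_
      have hone : ∀ χ ∈ D1, ‖ξ χ * χ x‖ = 1 := by
        intro χ _
        rw [norm_mul, hnorm χ,
          AddChar.norm_apply, mul_one]
      rw [Finset.sum_congr rfl hone, Finset.sum_const, nsmul_eq_mul, mul_one, hD1card]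
      rw [Nat.cast_sub (by omega : 1 ≤ q), Nat.cast_one]
    calc (1/(2*(q:ℝ))) * ‖∑ χ ∈ D1, ξ χ * χ x‖
        ≤ (1/(2*(q:ℝ))) * ((q:ℝ)-1) := by
          apply mul_le_mul_of_nonneg_left h2 (by positivity)
      _ = ((q:ℝ)-1)/(2*(q:ℝ)) := by ring
  have hgbound : ∀ x, |(g x).re| ≤ ((q:ℝ) - 1)/(2*q) := by
    intro x
    exact le_trans (Complex.abs_re_le_norm _) (habs x)
  have hbound2 : ((q:ℝ) - 1)/(2*q) < 1/2 := by
    rw [div_lt_div_iff₀ (by positivity) (by norm_num)]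
    have : (0:ℝ) < q := by positivity
    nlinarith
  -- f in [0,1]
  have hf01 : ∀ x, f x ∈ Set.Icc (0:ℝ) 1 := by
    intro x
    obtain ⟨hl, hr⟩ := abs_le.mp (hgbound x)
    rw [hf]
    constructor <;> simp only <;> linarith
  -- mean of f
  have hsumg : ∑ x, g x = 0 := by
    rw [hg]
    beta_reduce
    rw [← Finset.mul_sum, Finset.sum_comm]
    rw [Finset.sum_congr rfl (fun χ hχ => ?_), Finset.sum_const_zero, mul_zero]
    rw [← Finset.mul_sum, sum_addChar_eq_zero ((hD1mem χ).mp hχ), mul_zero]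
  have hmean : (∑ x, f x) / (q : ℝ) = 1/2 := by
    have hsf : ∑ x, f x = q/2 := by
      rw [hf]
      beta_reduce
      rw [Finset.sum_add_distrib, Finset.sum_const, Finset.card_univ, ← hq,
        ← Complex.re_sum, hsumg]
      simp
      ring
    rw [hsf]
    have : (q:ℝ) ≠ 0 := by positivity
    field_simp
  -- fourier coefficients
  have hfour : ∀ ρ : AddChar F ℂ, ρ ≠ 1 →
      fourierHat (fun x => (f x : ℂ)) ρ = ξ ρ / (2*(q:ℂ)) := by
    intro ρ hρ
    rw [fourierHat]
    have hnum : ∑ x, (f x : ℂ) * (starRingEnd ℂ) (ρ x) = ξ ρ / 2 := by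
      have hsplit : ∀ x : F, (f x : ℂ) * (starRingEnd ℂ) (ρ x)
          = (1/2) * ρ⁻¹ x + g x * ρ⁻¹ x := by
        intro x
        rw [hfC x, AddChar.inv_apply', AddChar.inv_apply_eq_conj]
        ring
      rw [Finset.sum_congr rfl (fun x _ => hsplit x), Finset.sum_add_distrib]
      have h1 : ∑ x, (1/2 : ℂ) * ρ⁻¹ x = 0 := by
        rw [← Finset.mul_sum, sum_addChar_eq_zero (fun h => hρ ?_), mul_zero]
        rw [← inv_inv ρ, h, inv_one]
      have h2 : ∑ x, g x * ρ⁻¹ x = ξ ρ / 2 := by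
        have hgx : ∀ x : F, g x * ρ⁻¹ x = (1/(2*(q:ℂ))) * ∑ χ ∈ D1, ξ χ * (χ x * ρ⁻¹ x) := by
          intro x
          rw [hg]
          beta_reduce
          rw [Finset.mul_sum, Finset.mul_sum, Finset.sum_mul]
          apply Finset.sum_congr rfl
          intro χ _
          ring
        rw [Finset.sum_congr rfl (fun x _ => hgx x), ← Finset.mul_sum, Finset.sum_comm]
        have hin : ∀ χ ∈ D1, ∑ x, ξ χ * (χ x * ρ⁻¹ x)
            = if χ = ρ then ξ χ * (q:ℂ) else 0 := by
          intro χ _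
          rw [← Finset.mul_sum, sum_char_mul_char χ ρ⁻¹, inv_inv]
          split_ifs <;> simp [hq]
        rw [Finset.sum_congr rfl hin, Finset.sum_ite_eq' D1 ρ (fun χ => ξ χ * (q:ℂ)),
          if_pos ((hD1mem ρ).mpr hρ)]
        field_simp
      rw [h1, h2, zero_add]
    rw [hnum, ← hq]
    field_simp
  -- value of sum of f
  have hsf : ∑ x, f x = (q:ℝ)/2 := by
    rw [hf]
    beta_reduce
    rw [Finset.sum_add_distrib, Finset.sum_const, Finset.card_univ, ← hq,
      ← Complex.re_sum, hsumg]
    simp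
    ring
  -- general: sum of g x * rho x
  have hgmul : ∀ ρ : AddChar F ℂ, ρ ≠ 1 → ∑ x, g x * ρ x = ξ ρ⁻¹ / 2 := by
    intro ρ hρ
    have hgx : ∀ x : F, g x * ρ x = (1/(2*(q:ℂ))) * ∑ χ ∈ D1, ξ χ * (χ x * ρ x) := by
      intro x
      rw [hg]
      beta_reduce
      rw [Finset.mul_sum, Finset.mul_sum, Finset.sum_mul]
      apply Finset.sum_congr rfl
      intro χ _
      ring
    rw [Finset.sum_congr rfl (fun x _ => hgx x), ← Finset.mul_sum, Finset.sum_comm]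
    have hin : ∀ χ ∈ D1, ∑ x, ξ χ * (χ x * ρ x)
        = if χ = ρ⁻¹ then ξ χ * (q:ℂ) else 0 := by
      intro χ _
      rw [← Finset.mul_sum, sum_char_mul_char χ ρ]
      split_ifs <;> simp [hq]
    have hρinv : ρ⁻¹ ∈ D1 := by
      rw [hD1mem]
      intro h; exact hρ (by rw [← inv_inv ρ, h, inv_one])
    rw [Finset.sum_congr rfl hin, Finset.sum_ite_eq' D1 ρ⁻¹ (fun χ => ξ χ * (q:ℂ)),
      if_pos hρinv]
    field_simp
  -- inner sums
  have hinner1 : ∀ (i : Fin k) (χ : AddChar F ℂ), (∑ y, (f y : ℂ) * χ (a i * y))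
      = if χ = 1 then (q:ℂ)/2 else ξ ((scaleChar (a i) χ)⁻¹) / 2 := by
    intro i χ
    have hissc : ∀ y, χ (a i * y) = scaleChar (a i) χ y :=
      fun y => (scaleChar_apply _ _ _).symm
    by_cases hχ : χ = 1
    · rw [if_pos hχ, hχ]
      simp only [AddChar.one_apply, mul_one]
      rw [show ∑ y, ((f y : ℝ) : ℂ) = ((∑ y, f y : ℝ) : ℂ) by push_cast; rfl, hsf]
      push_cast
      ring
    · rw [if_neg hχ]
      have hsc1 : scaleChar (a i) χ ≠ 1 := fun h => hχ ((scaleChar_eq_one_iff (ha i)).mp h)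
      have hsplit : ∀ y : F, (f y : ℂ) * χ (a i * y)
          = (1/2) * scaleChar (a i) χ y + g y * scaleChar (a i) χ y := by
        intro y
        rw [hfC y, hissc y]
        ring
      rw [Finset.sum_congr rfl (fun y _ => hsplit y), Finset.sum_add_distrib,
        ← Finset.mul_sum, sum_addChar_eq_zero hsc1, mul_zero, zero_add,
        hgmul _ hsc1]
  have hinnerOne : ∀ (i : Fin k) (χ : AddChar F ℂ), (∑ y, (1:ℂ) * χ (a i * y))
      = if χ = 1 then (q:ℂ) else 0 := by
    intro i χ
    have hissc : ∀ y, χ (a i * y) = scaleChar (a i) χ y :=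
      fun y => (scaleChar_apply _ _ _).symm
    simp_rw [one_mul, hissc]
    by_cases hχ : χ = 1
    · rw [if_pos hχ, hχ, scaleChar_one]
      simp [hq]
    · rw [if_neg hχ]
      exact sum_addChar_eq_zero (fun h => hχ ((scaleChar_eq_one_iff (ha i)).mp h))
  have hinner2 : ∀ (i : Fin k) (χ : AddChar F ℂ), (∑ y, (1 - (f y : ℂ)) * χ (a i * y))
      = if χ = 1 then (q:ℂ)/2 else -(ξ ((scaleChar (a i) χ)⁻¹) / 2) := by
    intro i χ
    have : ∀ y : F, (1 - (f y : ℂ)) * χ (a i * y)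
        = (1:ℂ) * χ (a i * y) - (f y : ℂ) * χ (a i * y) := by intro y; ring
    rw [Finset.sum_congr rfl (fun y _ => this y), Finset.sum_sub_distrib,
      hinnerOne i χ, hinner1 i χ]
    split_ifs
    · ring
    · ring
  -- splитting sums over characters
  have hsplitsum : ∀ G : AddChar F ℂ → ℂ, ∑ χ : AddChar F ℂ, G χ = G 1 + ∑ χ ∈ D1, G χ := by
    intro G
    rw [hD1, Finset.filter_ne']
    exact (Finset.add_sum_erase _ G (Finset.mem_univ 1)).symm
  -- the T sum over D1
  have hTsumD1 : ∑ χ ∈ D1, ∏ i, ξ (scaleChar (a i) χ) = (Tr : ℂ) := hTval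
  -- complex identities
  set sols : Finset (Fin k → F) :=
    Finset.univ.filter (fun x : Fin k → F => ∑ i, a i * x i = 0) with hsols
  have EA_C : (q:ℂ) * (∑ x ∈ sols, ∏ i, ((f (x i) : ℂ)))
      = ((q:ℂ)/2)^k + (Tr:ℂ)/2^k := by
    rw [hsols, hq, key_sum k a (fun _ y => (f y : ℂ)), ← hq]
    beta_reduce
    rw [hsplitsum (fun χ => ∏ i, (∑ y, (f y:ℂ) * χ (a i * y)))]
    have h1 : (∏ i, (∑ y, (f y:ℂ) * (1 : AddChar F ℂ) (a i * y))) = ((q:ℂ)/2)^k := by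
      rw [Finset.prod_congr rfl (fun i _ => by rw [hinner1 i 1, if_pos rfl]),
        Finset.prod_const, Finset.card_univ, Fintype.card_fin]
    have h2 : ∑ χ ∈ D1, ∏ i, (∑ y, (f y:ℂ) * χ (a i * y)) = (Tr:ℂ)/2^k := by
      have hterm : ∀ χ ∈ D1, (∏ i, (∑ y, (f y:ℂ) * χ (a i * y)))
          = (∏ i, ξ (scaleChar (a i) χ⁻¹)) / 2^k := by
        intro χ hχ
        have hne := (hD1mem χ).mp hχ
        have hfac : ∀ i : Fin k, (∑ y, (f y:ℂ) * χ (a i * y))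
            = ξ (scaleChar (a i) χ⁻¹) / 2 := by
          intro i
          rw [hinner1 i χ, if_neg hne, scaleChar_inv']
        rw [Finset.prod_congr rfl (fun i _ => hfac i), Finset.prod_div_distrib,
          Finset.prod_const, Finset.card_univ, Fintype.card_fin]
      rw [Finset.sum_congr rfl hterm, ← Finset.sum_div,
        reindex_inv D1 hD1inv (fun ρ => ∏ i, ξ (scaleChar (a i) ρ)), hTsumD1]
    rw [h1, h2]
  have EB_C : (q:ℂ) * (∑ x ∈ sols, ∏ i, (1 - (f (x i) : ℂ)))
      = ((q:ℂ)/2)^k + (Tr:ℂ)/2^k := by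
    rw [hsols, hq, key_sum k a (fun _ y => (1 - (f y : ℂ))), ← hq]
    beta_reduce
    rw [hsplitsum (fun χ => ∏ i, (∑ y, (1 - (f y:ℂ)) * χ (a i * y)))]
    have h1 : (∏ i, (∑ y, (1 - (f y:ℂ)) * (1 : AddChar F ℂ) (a i * y))) = ((q:ℂ)/2)^k := by
      rw [Finset.prod_congr rfl (fun i _ => by rw [hinner2 i 1, if_pos rfl]),
        Finset.prod_const, Finset.card_univ, Fintype.card_fin]
    have h2 : ∑ χ ∈ D1, ∏ i, (∑ y, (1 - (f y:ℂ)) * χ (a i * y)) = (Tr:ℂ)/2^k := by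
      have hterm : ∀ χ ∈ D1, (∏ i, (∑ y, (1 - (f y:ℂ)) * χ (a i * y)))
          = (∏ i, ξ (scaleChar (a i) χ⁻¹)) / 2^k := by
        intro χ hχ
        have hne := (hD1mem χ).mp hχ
        have hfac : ∀ i : Fin k, (∑ y, (1 - (f y:ℂ)) * χ (a i * y))
            = -(1 : ℂ) * (ξ (scaleChar (a i) χ⁻¹) / 2) := by
          intro i
          rw [hinner2 i χ, if_neg hne, scaleChar_inv']
          ring
        rw [Finset.prod_congr rfl (fun i _ => hfac i), Finset.prod_mul_distrib,
          Finset.prod_const, Finset.card_univ, Fintype.card_fin,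
          Even.neg_one_pow hk, one_mul, Finset.prod_div_distrib,
          Finset.prod_const, Finset.card_univ, Fintype.card_fin]
      rw [Finset.sum_congr rfl hterm, ← Finset.sum_div,
        reindex_inv D1 hD1inv (fun ρ => ∏ i, ξ (scaleChar (a i) ρ)), hTsumD1]
    rw [h1, h2]
  have EN_C : (q:ℂ) * (sols.card : ℂ) = (q:ℂ)^k := by
    have hcount : (∑ _x ∈ sols, ∏ _i : Fin k, (1:ℂ)) = (sols.card : ℂ) := by
      simp
    rw [← hcount, hsols, hq, key_sum k a (fun _ _ => (1 : ℂ)), ← hq]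
    beta_reduce
    rw [hsplitsum (fun χ => ∏ i, (∑ y, (1:ℂ) * χ (a i * y)))]
    have h1 : (∏ i, (∑ y, (1:ℂ) * (1 : AddChar F ℂ) (a i * y))) = (q:ℂ)^k := by
      rw [Finset.prod_congr rfl (fun i _ => by rw [hinnerOne i 1, if_pos rfl]),
        Finset.prod_const, Finset.card_univ, Fintype.card_fin]
    have h2 : ∑ χ ∈ D1, ∏ i, (∑ y, (1:ℂ) * χ (a i * y)) = 0 := by
      apply Finset.sum_eq_zero
      intro χ hχ
      have hne := (hD1mem χ).mp hχ
      rw [Finset.prod_congr rfl (fun i _ => by rw [hinnerOne i χ, if_neg hne]),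
        Finset.prod_const, Finset.card_univ, Fintype.card_fin]
      exact zero_pow hk0
    rw [h1, h2, add_zero]
  -- move to the reals
  have hcastA : ((∑ x ∈ sols, ∏ i, f (x i) : ℝ) : ℂ) = ∑ x ∈ sols, ∏ i, ((f (x i):ℂ)) := by
    rw [Complex.ofReal_sum]
    exact Finset.sum_congr rfl (fun x _ => Complex.ofReal_prod _ _)
  have hcastB : ((∑ x ∈ sols, ∏ i, (1 - f (x i)) : ℝ) : ℂ)
      = ∑ x ∈ sols, ∏ i, (1 - (f (x i):ℂ)) := by
    rw [Complex.ofReal_sum]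
    refine Finset.sum_congr rfl (fun x _ => ?_)
    rw [Complex.ofReal_prod]
    exact Finset.prod_congr rfl (fun i _ => by push_cast; ring)
  have EA : (q:ℝ) * (∑ x ∈ sols, ∏ i, f (x i)) = ((q:ℝ)/2)^k + Tr/2^k := by
    apply Complex.ofReal_injective
    push_cast
    exact_mod_cast EA_C
  have EB : (q:ℝ) * (∑ x ∈ sols, ∏ i, (1 - f (x i))) = ((q:ℝ)/2)^k + Tr/2^k := by
    apply Complex.ofReal_injective
    push_cast
    exact_mod_cast EB_C
  have EN : (q:ℝ) * (sols.card : ℝ) = (q:ℝ)^k := by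
    exact_mod_cast EN_C
  have hQ : (0:ℝ) < q := by positivity
  have hNpos : (0:ℝ) < (sols.card : ℝ) := by
    have hqk : (0:ℝ) < (q:ℝ)^k := by positivity
    nlinarith
  have h2k : (0:ℝ) < (2:ℝ)^k := by positivity
  -- final assembly
  refine ⟨f, hf01, hmean, ⟨Tr/(2*(q:ℝ))^k, ?_, ?_⟩, ?_⟩
  · have hterm : ∀ ρ ∈ D1, (∏ i, fourierHat (fun x => (f x : ℂ)) (scaleChar (a i) ρ))
        = (∏ i, ξ (scaleChar (a i) ρ))/(2*(q:ℂ))^k := by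
      intro ρ hρ
      have hne := (hD1mem ρ).mp hρ
      have hfac : ∀ i : Fin k, fourierHat (fun x => (f x : ℂ)) (scaleChar (a i) ρ)
          = ξ (scaleChar (a i) ρ) / (2*(q:ℂ)) := by
        intro i
        exact hfour _ (fun h => hne ((scaleChar_eq_one_iff (ha i)).mp h))
      rw [Finset.prod_congr rfl (fun i _ => hfac i), Finset.prod_div_distrib,
        Finset.prod_const, Finset.card_univ, Fintype.card_fin]
    rw [Finset.sum_congr rfl hterm, ← Finset.sum_div, hTsumD1]
    push_cast
    ring
  · apply div_neg_of_neg_of_pos hTneg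
    positivity
  · rw [← add_div]
    have hpow : (2:ℝ)^((1:ℤ) - k) = 2/2^k := by
      rw [zpow_sub₀ (by norm_num : (2:ℝ) ≠ 0), zpow_one, zpow_natCast]
    rw [hpow, div_lt_div_iff₀ hNpos h2k]
    have hkey : (q:ℝ) * ((∑ x ∈ sols, ∏ i, f (x i)) + (∑ x ∈ sols, ∏ i, (1 - f (x i))))
        = 2*((q:ℝ)/2)^k + 2*Tr/2^k := by
      rw [mul_add, EA, EB]
      ring
    have hdiv : ((q:ℝ)/2)^k * 2^k = (q:ℝ)^k := by
      rw [div_pow]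
      field_simp
    have hq2k : (q:ℝ) * (((∑ x ∈ sols, ∏ i, f (x i)) + (∑ x ∈ sols, ∏ i, (1 - f (x i)))) * 2^k)
        = 2*(q:ℝ)^k + 2*Tr := by
      rw [← mul_assoc, hkey, add_mul, mul_assoc 2 _ _, hdiv]
      field_simp
    have hrhs : (q:ℝ) * (2 * (sols.card : ℝ)) = 2*(q:ℝ)^k := by
      rw [show (q:ℝ) * (2 * (sols.card:ℝ)) = 2 * ((q:ℝ)*(sols.card:ℝ)) by ring, EN]
    have : (q:ℝ) * (((∑ x ∈ sols, ∏ i, f (x i)) + (∑ x ∈ sols, ∏ i, (1 - f (x i)))) * 2^k)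
        < (q:ℝ) * (2 * (sols.card : ℝ)) := by
      rw [hq2k, hrhs]
      linarith
    exact lt_of_mul_lt_mul_left this (le_of_lt hQ)
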